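/- Let X be a completely regular Hausdorff space, E a nonzero Banach space over 𝕜, and 𝒜 a standard subalgebra of B(E). Then for every F ∈ C(X, 𝒜), 𝒞(F) = {G ∈ C(X, 𝒜) : c(G) ⊆ int(cl(c(F)))}, where int and cl denote interior and closure in X. -/

import Mathlib

set_option synthInstance.maxHeartbeats 400000
set_option maxHeartbeats 1000000

/-- A subalgebra of `B(E)` is *standard* if it contains every continuous finite-rank
operator (it contains the identity automatically, being a subalgebra). -/
def IsStandardSubalgebra (𝕜 : Type*) [RCLike 𝕜] {E : Type*} [NormedAddCommGroup E]
    [NormedSpace 𝕜 E] (𝒜 : Subalgebra 𝕜 (E →L[𝕜] E)) : Prop :=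
  ∀ A : E →L[𝕜] E, FiniteDimensional 𝕜 (LinearMap.range (A : E →ₗ[𝕜] E)) → A ∈ 𝒜

set_option maxHeartbeats 8000000 in
set_option synthInstance.maxHeartbeats 2000000 in
theorem C_of_F_eq_interior_closure_cozero
    {𝕜 : Type*} [RCLike 𝕜]
    {E : Type*} [NormedAddCommGroup E] [NormedSpace 𝕜 E] [CompleteSpace E] [Nontrivial E]
    (𝒜 : Subalgebra 𝕜 (E →L[𝕜] E)) (h𝒜 : IsStandardSubalgebra 𝕜 𝒜)
    {X : Type*} [TopologicalSpace X] [CompletelyRegularSpace X] [T2Space X]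
    (F : C(X, 𝒜)) :
    {G : C(X, 𝒜) | ∀ H : C(X, 𝒜),
        (∀ K : C(X, 𝒜), K * H = 0 → H * K = 0) → F * H = 0 → G * H = 0} =
      {G : C(X, 𝒜) | {x | G x ≠ 0} ⊆ interior (closure {x | F x ≠ 0})} := by
  ext G
  simp only [Set.mem_setOf_eq]
  constructor
  · -- 𝒞(F) ⊆ {G : c(G) ⊆ int cl c(F)}
    intro hG x₀ hx₀
    by_contra hx₀'
    -- find x₁ ∈ V := (closure c(F))ᶜ with G x₁ ≠ 0
    have hopen : IsOpen {x | G x ≠ 0} :=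
      isOpen_compl_iff.mpr (isClosed_singleton.preimage G.continuous)
    have hne : ({x | G x ≠ 0} ∩ (closure {x | F x ≠ 0})ᶜ).Nonempty := by
      by_contra hemp
      have hsub : {x | G x ≠ 0} ⊆ closure {x | F x ≠ 0} := by
        intro y hy
        by_contra hy'
        exact hemp ⟨y, hy, hy'⟩
      exact hx₀' (interior_maximal hsub hopen hx₀)
    obtain ⟨x₁, hGx₁, hx₁V⟩ := hne
    -- complete regularity: f = 0 at x₁, f = 1 on closure c(F)
    obtain ⟨f, hf, hfx₁, hfK⟩ := CompletelyRegularSpace.completely_regular x₁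
      (closure {x | F x ≠ 0}) isClosed_closure hx₁V
    -- H x = (1 - f x) • 1, a central element
    set c : X → 𝕜 := fun x => ((1 : ℝ) - (f x : ℝ) : ℝ) with hc
    have hcont : Continuous fun x => (c x) • (1 : 𝒜) := by
      refine Continuous.smul (f := c) (g := fun _ => (1 : 𝒜)) ?_ continuous_const
      exact RCLike.continuous_ofReal.comp (continuous_const.sub
        (continuous_induced_dom.comp hf))
    set H : C(X, 𝒜) := ⟨fun x => (c x) • (1 : 𝒜), hcont⟩ with hH
    have hcentral : ∀ K : C(X, 𝒜), K * H = H * K := by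
      intro K
      ext x
      simp only [ContinuousMap.mul_apply, hH, ContinuousMap.coe_mk]
      rw [mul_smul_comm, smul_mul_assoc, mul_one, one_mul]
    have hFx₁ : ∀ x, x ∉ closure {y | F y ≠ 0} → F x = 0 := by
      intro x hx
      by_contra h
      exact hx (subset_closure h)
    have hFH : F * H = 0 := by
      ext x
      simp only [ContinuousMap.mul_apply, ContinuousMap.zero_apply, hH,
        ContinuousMap.coe_mk]
      by_cases hx : x ∈ closure {y | F y ≠ 0}
      · have : c x = 0 := by
          have := hfK hx
          simp only [hc, Pi.one_apply] at this ⊢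
          rw [this]
          norm_num
        rw [this, zero_smul, mul_zero]
      · rw [hFx₁ x hx, zero_mul]
    have hGH : G * H = 0 := hG H (fun K hK => by rwa [← hcentral]) hFH
    have : (G * H) x₁ = 0 := by rw [hGH]; rfl
    simp only [ContinuousMap.mul_apply, hH, ContinuousMap.coe_mk] at this
    have hcx₁ : c x₁ = 1 := by
      simp only [hc, hfx₁]
      norm_num
    rw [hcx₁, one_smul, mul_one] at this
    exact hGx₁ this
  · -- converse
    intro hG H hAI hFH
    -- first: H vanishes on c(F)
    have key : ∀ x, F x ≠ 0 → H x = 0 := by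
      intro x₁ hFx₁
      by_contra hHx₁
      -- pick vectors
      have hFop : ((F x₁ : E →L[𝕜] E)) ≠ 0 := fun h => hFx₁ (Subtype.ext h)
      have hHop : ((H x₁ : E →L[𝕜] E)) ≠ 0 := fun h => hHx₁ (Subtype.ext h)
      obtain ⟨ξ, hξ⟩ : ∃ ξ, (F x₁ : E →L[𝕜] E) ξ ≠ 0 := by
        by_contra h
        push_neg at h
        exact hFop (ContinuousLinearMap.ext fun y => by rw [h y]; rfl)
      obtain ⟨u, hu⟩ : ∃ u, (H x₁ : E →L[𝕜] E) u ≠ 0 := by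
        by_contra h
        push_neg at h
        exact hHop (ContinuousLinearMap.ext fun y => by rw [h y]; rfl)
      obtain ⟨φ, -, hφ⟩ := exists_dual_vector 𝕜 ((F x₁ : E →L[𝕜] E) ξ) (norm_ne_zero_iff.mpr hξ)
      set T : E →L[𝕜] E := φ.smulRight u with hT
      have hTmem : T ∈ 𝒜 := by
        apply h𝒜
        have hle : LinearMap.range (T : E →ₗ[𝕜] E) ≤ 𝕜 ∙ u := by
          rintro y ⟨z, rfl⟩
          exact Submodule.mem_span_singleton.mpr ⟨φ z, rfl⟩
        exact Submodule.finiteDimensional_of_le hle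
      set K : C(X, 𝒜) := (ContinuousMap.const X (⟨T, hTmem⟩ : 𝒜)) * F with hK
      have hKH : K * H = 0 := by
        ext x
        have := congrFun (congrArg DFunLike.coe hFH) x
        simp only [ContinuousMap.mul_apply, ContinuousMap.zero_apply] at this ⊢
        simp only [hK, ContinuousMap.mul_apply, ContinuousMap.const_apply]
        rw [mul_assoc, this, mul_zero]
      have hHK : H * K = 0 := hAI K hKH
      have hzero : (H x₁ : E →L[𝕜] E) * (T * (F x₁ : E →L[𝕜] E)) = 0 := by
        have := congrFun (congrArg DFunLike.coe hHK) x₁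
        simp only [ContinuousMap.mul_apply, ContinuousMap.zero_apply, hK,
          ContinuousMap.const_apply] at this
        have := congrArg (Subtype.val) this
        simpa using this
      have happ : ((H x₁ : E →L[𝕜] E) * (T * (F x₁ : E →L[𝕜] E))) ξ = 0 := by
        rw [hzero]; rfl
      rw [ContinuousLinearMap.mul_apply, ContinuousLinearMap.mul_apply, hT,
        ContinuousLinearMap.smulRight_apply, map_smul] at happ
      have hφne : φ ((F x₁ : E →L[𝕜] E) ξ) ≠ 0 := by
        rw [hφ]
        exact_mod_cast norm_ne_zero_iff.mpr hξ
      exact (smul_ne_zero hφne hu) happ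
    -- H vanishes on closure c(F)
    have hHcl : ∀ x ∈ closure {y | F y ≠ 0}, H x = 0 := by
      have hclosed : IsClosed {x | H x = 0} :=
        isClosed_singleton.preimage H.continuous
      have : closure {y | F y ≠ 0} ⊆ {x | H x = 0} :=
        closure_minimal (fun y hy => key y hy) hclosed
      exact fun x hx => this hx
    ext x
    simp only [ContinuousMap.mul_apply, ContinuousMap.zero_apply]
    by_cases hGx : G x = 0
    · rw [hGx, zero_mul]
    · rw [hHcl x (interior_subset (hG hGx)), mul_zero]
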